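/- Let H be a real Hilbert space with inner product (·,·) and let A be a positive self-adjoint operator on H. Suppose u : [0,T] → D(A) is twice continuously differentiable (with u' taking values in D(A^{1/2}) continuously) and satisfies, for constants τ, b, c² > 0, the linear MGT equation τ u''' + u'' + c²Au + bAu' = 0 on [0,T] (with u''' continuous in H). Define E₁(t) = (τ/2)‖u''(t)‖² + (b/2)‖A^{1/2}u'(t)‖² + c²(Au(t), u'(t)) + (c⁴/(2b))‖A^{1/2}u(t)‖² + (τc²/b)(u''(t), u'(t)) + (c²/(2b))‖u'(t)‖². Then for all t ∈ [0,T], (d/dt)E₁(t) = −γ‖u''(t)‖² where γ = 1 − τc²/b. -/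

import Mathlib

open Set RealInnerProductSpace

/-- Energy identity for the linear MGT equation `τu''' + u'' + c²Au + bAu' = 0`:
with `E₁` as below one has `(d/dt)E₁(t) = −γ‖u''(t)‖²`, `γ = 1 − τc²/b`.
`A` is a positive symmetric operator and `Asq` plays the role of `A^{1/2}`
(symmetric, positive, with `Asq ∘ Asq = A`). -/
theorem stmt_9 {H : Type*} [NormedAddCommGroup H] [InnerProductSpace ℝ H]
    [CompleteSpace H]
    (A Asq : H →ₗ[ℝ] H)
    (hAsym : ∀ u v : H, ⟪A u, v⟫ = ⟪u, A v⟫)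
    (hApos : ∀ u : H, 0 ≤ ⟪A u, u⟫)
    (hAsqSym : ∀ u v : H, ⟪Asq u, v⟫ = ⟪u, Asq v⟫)
    (hAsqPos : ∀ u : H, 0 ≤ ⟪Asq u, u⟫)
    (hAsqSq : ∀ u : H, Asq (Asq u) = A u)
    (τ b csq : ℝ) (hτ : 0 < τ) (hb : 0 < b) (hcsq : 0 < csq)
    (T : ℝ) (hT : 0 < T)
    (u u1 u2 u3 : ℝ → H)
    (hu : ∀ t, HasDerivAt u (u1 t) t)
    (hu1 : ∀ t, HasDerivAt u1 (u2 t) t)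
    (hu2 : ∀ t, HasDerivAt u2 (u3 t) t)
    (hu3c : Continuous u3)
    (heq : ∀ t ∈ Icc (0:ℝ) T,
      τ • u3 t + u2 t + csq • A (u t) + b • A (u1 t) = 0) :
    ∀ t ∈ Icc (0:ℝ) T,
      HasDerivAt (fun s =>
          τ / 2 * ‖u2 s‖ ^ 2 + b / 2 * ‖Asq (u1 s)‖ ^ 2 + csq * ⟪A (u s), u1 s⟫ +
          csq ^ 2 / (2 * b) * ‖Asq (u s)‖ ^ 2 + (τ * csq / b) * ⟪u2 s, u1 s⟫ +
          csq / (2 * b) * ‖u1 s‖ ^ 2)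
        (-(1 - τ * csq / b) * ‖u2 t‖ ^ 2) t := by
  intro t ht
  have hAc : Continuous A := LinearMap.IsSymmetric.continuous hAsym
  have hAsqc : Continuous Asq := LinearMap.IsSymmetric.continuous hAsqSym
  let L : H →L[ℝ] H := ⟨A, hAc⟩
  let Lsq : H →L[ℝ] H := ⟨Asq, hAsqc⟩
  have hAu : HasDerivAt (fun s => A (u s)) (A (u1 t)) t :=
    L.hasFDerivAt.comp_hasDerivAt t (hu t)
  have hAsqu : HasDerivAt (fun s => Asq (u s)) (Asq (u1 t)) t :=
    Lsq.hasFDerivAt.comp_hasDerivAt t (hu t)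
  have hAsqu1 : HasDerivAt (fun s => Asq (u1 s)) (Asq (u2 t)) t :=
    Lsq.hasFDerivAt.comp_hasDerivAt t (hu1 t)
  simp only [← real_inner_self_eq_norm_sq]
  have D : HasDerivAt (fun s =>
      τ / 2 * ⟪u2 s, u2 s⟫ + b / 2 * ⟪Asq (u1 s), Asq (u1 s)⟫ + csq * ⟪A (u s), u1 s⟫ +
      csq ^ 2 / (2 * b) * ⟪Asq (u s), Asq (u s)⟫ + (τ * csq / b) * ⟪u2 s, u1 s⟫ +
      csq / (2 * b) * ⟪u1 s, u1 s⟫)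
      (τ / 2 * (⟪u2 t, u3 t⟫ + ⟪u3 t, u2 t⟫)
        + b / 2 * (⟪Asq (u1 t), Asq (u2 t)⟫ + ⟪Asq (u2 t), Asq (u1 t)⟫)
        + csq * (⟪A (u t), u2 t⟫ + ⟪A (u1 t), u1 t⟫)
        + csq ^ 2 / (2 * b) * (⟪Asq (u t), Asq (u1 t)⟫ + ⟪Asq (u1 t), Asq (u t)⟫)
        + (τ * csq / b) * (⟪u2 t, u2 t⟫ + ⟪u3 t, u1 t⟫)
        + csq / (2 * b) * (⟪u1 t, u2 t⟫ + ⟪u2 t, u1 t⟫)) t := by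
    exact ((((((((hu2 t).inner ℝ (hu2 t)).const_mul (τ/2)).add
      (((hAsqu1.inner ℝ hAsqu1)).const_mul (b/2))).add
      ((hAu.inner ℝ (hu1 t)).const_mul csq)).add
      ((hAsqu.inner ℝ hAsqu).const_mul (csq^2/(2*b)))).add
      (((hu2 t).inner ℝ (hu1 t)).const_mul (τ*csq/b))).add
      (((hu1 t).inner ℝ (hu1 t)).const_mul (csq/(2*b))))
  convert D using 1
  have e := heq t ht
  have h1 : τ * ⟪u3 t, u2 t⟫ + ⟪u2 t, u2 t⟫ + csq * ⟪A (u t), u2 t⟫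
      + b * ⟪A (u1 t), u2 t⟫ = 0 := by
    have := congrArg (fun x => ⟪x, u2 t⟫) e
    simpa [inner_add_left, real_inner_smul_left] using this
  have h2 : τ * ⟪u3 t, u1 t⟫ + ⟪u2 t, u1 t⟫ + csq * ⟪A (u t), u1 t⟫
      + b * ⟪A (u1 t), u1 t⟫ = 0 := by
    have := congrArg (fun x => ⟪x, u1 t⟫) e
    simpa [inner_add_left, real_inner_smul_left] using this
  have k1 : ⟪Asq (u1 t), Asq (u2 t)⟫ = ⟪A (u1 t), u2 t⟫ := by
    rw [hAsqSym, hAsqSq, ← hAsym]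
  have k2 : ⟪Asq (u2 t), Asq (u1 t)⟫ = ⟪A (u1 t), u2 t⟫ := by
    rw [hAsqSym, hAsqSq, real_inner_comm]
  have k3 : ⟪Asq (u t), Asq (u1 t)⟫ = ⟪A (u t), u1 t⟫ := by
    rw [hAsqSym, hAsqSq, ← hAsym]
  have k4 : ⟪Asq (u1 t), Asq (u t)⟫ = ⟪A (u t), u1 t⟫ := by
    rw [hAsqSym, hAsqSq, real_inner_comm]
  have k5 : ⟪u2 t, u3 t⟫ = ⟪u3 t, u2 t⟫ := real_inner_comm _ _
  have k6 : ⟪u1 t, u2 t⟫ = ⟪u2 t, u1 t⟫ := real_inner_comm _ _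
  rw [k1, k2, k3, k4, k5, k6]
  have hb' : b ≠ 0 := ne_of_gt hb
  field_simp
  linear_combination (-2*b) * h1 + (-2*csq) * h2
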